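/- The center of the right-angled Artin group A_Γ is the special subgroup generated by the set of vertices of Γ that are adjacent to every other vertex; in particular, if no vertex is adjacent to all others, the center of A_Γ is trivial. -/

import Mathlib

/-- The commutator relations of the right-angled Artin group of a graph `G`. -/
def raagRels {V : Type*} (G : SimpleGraph V) : Set (FreeGroup V) :=
  {r | ∃ s t : V, G.Adj s t ∧
    r = FreeGroup.of s * FreeGroup.of t * (FreeGroup.of s)⁻¹ * (FreeGroup.of t)⁻¹}

/-- The right-angled Artin group of a graph `G`. -/
abbrev RAAG {V : Type*} (G : SimpleGraph V) : Type _ := PresentedGroup (raagRels G)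
namespace RAAGAux

variable {V : Type*} (G : SimpleGraph V)

/-- Build a hom out of a RAAG from a commuting family. -/
def toGroup {H : Type*} [Group H] (f : V → H)
    (hf : ∀ s t, G.Adj s t → Commute (f s) (f t)) : RAAG G →* H :=
  PresentedGroup.toGroup (f := f) (by
    rintro r ⟨s, t, hst, rfl⟩
    have h := commutatorElement_eq_one_iff_commute.2 (hf s t hst)
    simpa [commutatorElement_def] using h)

@[simp] lemma toGroup_of {H : Type*} [Group H] (f : V → H)
    (hf : ∀ s t, G.Adj s t → Commute (f s) (f t)) (u : V) :
    toGroup G f hf (PresentedGroup.of u) = f u :=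
  PresentedGroup.toGroup.of _

variable {G}

lemma adj_commute {s t : V} (h : G.Adj s t) :
    Commute (PresentedGroup.of s : RAAG G) (PresentedGroup.of t) := by
  have hr : (FreeGroup.of s * FreeGroup.of t * (FreeGroup.of s)⁻¹ * (FreeGroup.of t)⁻¹ :
      FreeGroup V) ∈ raagRels G := ⟨s, t, h, rfl⟩
  have h1 : PresentedGroup.mk (raagRels G)
      (FreeGroup.of s * FreeGroup.of t * (FreeGroup.of s)⁻¹ * (FreeGroup.of t)⁻¹) = 1 :=
    (QuotientGroup.eq_one_iff _).2 (Subgroup.subset_normalClosure hr)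
  have h2 : (PresentedGroup.of s : RAAG G) * PresentedGroup.of t *
      (PresentedGroup.of s)⁻¹ * (PresentedGroup.of t)⁻¹ = 1 := by
    simpa [map_mul, map_inv, PresentedGroup.of] using h1
  exact commutatorElement_eq_one_iff_commute.1 (by simpa [commutatorElement_def] using h2)


lemma of_mem_center {v : V} (hv : ∀ w, w ≠ v → G.Adj v w) :
    (PresentedGroup.of v : RAAG G) ∈ Subgroup.center (RAAG G) := by
  rw [Subgroup.mem_center_iff]
  intro g
  have hg : g ∈ Subgroup.centralizer {(PresentedGroup.of v : RAAG G)} := by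
    refine PresentedGroup.generated_by _ _ (fun j => ?_) g
    rw [Subgroup.mem_centralizer_iff]
    rintro x rfl
    rcases eq_or_ne j v with rfl | hj
    · rfl
    · exact (adj_commute (hv j hj)).eq
  exact ((Subgroup.mem_centralizer_iff.1 hg) _ rfl).symm

open Classical in
/-- The projection killing generators outside `S`. -/
noncomputable def proj (G : SimpleGraph V) (S : Set V) : RAAG G →* RAAG G :=
  toGroup G (fun u => if u ∈ S then PresentedGroup.of u else 1) (by
    intro s t hst
    split_ifs <;>
      first
        | exact Commute.one_left _
        | exact Commute.one_right _
        | exact adj_commute hst)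

open Classical in
@[simp] lemma proj_of (G : SimpleGraph V) (S : Set V) (u : V) :
    proj G S (PresentedGroup.of u) = if u ∈ S then PresentedGroup.of u else 1 :=
  toGroup_of _ _ _ _

lemma proj_fix (G : SimpleGraph V) (S : Set V) {x : RAAG G}
    (hx : x ∈ Subgroup.closure (PresentedGroup.of '' S)) : proj G S x = x := by
  induction hx using Subgroup.closure_induction with
  | mem y hy =>
    obtain ⟨u, hu, rfl⟩ := hy
    simp [proj_of, hu]
  | one => simp
  | mul a b _ _ ha hb => simp [map_mul, ha, hb]
  | inv a _ ha => simp [map_inv, ha]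

lemma proj_mem (G : SimpleGraph V) (S T : Set V) {x : RAAG G}
    (hx : x ∈ Subgroup.closure (PresentedGroup.of '' T)) :
    proj G S x ∈ Subgroup.closure (PresentedGroup.of '' (S ∩ T)) := by
  induction hx using Subgroup.closure_induction with
  | mem y hy =>
    obtain ⟨u, hu, rfl⟩ := hy
    rw [proj_of]
    split_ifs with h
    · exact Subgroup.subset_closure ⟨u, ⟨h, hu⟩, rfl⟩
    · exact one_mem _
  | one => exact one_mem _
  | mul a b _ _ ha hb => rw [map_mul]; exact mul_mem ha hb
  | inv a _ ha => rw [map_inv]; exact inv_mem ha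

lemma closure_inter_le (G : SimpleGraph V) (S T : Set V) :
    Subgroup.closure (PresentedGroup.of '' S) ⊓ Subgroup.closure (PresentedGroup.of '' T) ≤
      Subgroup.closure (PresentedGroup.of '' (S ∩ T) : Set (RAAG G)) := by
  rintro x ⟨hS, hT⟩
  have := proj_mem G S T hT
  rwa [proj_fix G S hS] at this


/-! ### The HNN decomposition at a vertex -/

section HNNStep

open HNNExtension

variable {V : Type*} (G : SimpleGraph V) (v : V)

/-- The induced subgraph on the complement of `v`. -/
abbrev Gdel : SimpleGraph ({u : V | u ≠ v} : Set V) := G.induce {u : V | u ≠ v}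

/-- The RAAG of the graph with `v` deleted. -/
abbrev Hgrp := RAAG (Gdel G v)

/-- The subgroup generated by the link of `v`. -/
def Asub : Subgroup (Hgrp G v) :=
  Subgroup.closure (PresentedGroup.of '' {u : ({u : V | u ≠ v} : Set V) | G.Adj v ↑u})

/-- The HNN extension of `Hgrp` along the identity of `Asub`. -/
abbrev Egrp := HNNExtension (Hgrp G v) (Asub G v) (Asub G v) (MulEquiv.refl _)

lemma commute_t_of_mem_Asub {a : Hgrp G v} (ha : a ∈ Asub G v) :
    Commute (t : Egrp G v) (of a) := by
  have := t_mul_of (φ := (MulEquiv.refl (Asub G v))) ⟨a, ha⟩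
  simpa [Commute, SemiconjBy] using this

open Classical in
/-- The isomorphism `RAAG G →* Egrp`. -/
noncomputable def ψmap : RAAG G →* Egrp G v :=
  toGroup G (fun u =>
    if h : u = v then t else of (PresentedGroup.of (⟨u, h⟩ : ({u : V | u ≠ v} : Set V))))
    (by
      intro x y hxy
      split_ifs with hx hy hy
      · exact Commute.refl _
      · exact commute_t_of_mem_Asub G v
          (Subgroup.subset_closure ⟨⟨y, hy⟩, (hx ▸ hxy : G.Adj v y), rfl⟩)
      · exact (commute_t_of_mem_Asub G v
          (Subgroup.subset_closure ⟨⟨x, hx⟩, ((hy ▸ hxy : G.Adj x v)).symm, rfl⟩)).symm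
      · exact (adj_commute (by simpa using hxy)).map of)

open Classical in
@[simp] lemma ψmap_of (u : V) :
    ψmap G v (PresentedGroup.of u) =
      if h : u = v then t else of (PresentedGroup.of (⟨u, h⟩ : ({u : V | u ≠ v} : Set V))) :=
  toGroup_of _ _ _ _

/-- The inclusion `Hgrp →* RAAG G`. -/
def ιmap : Hgrp G v →* RAAG G :=
  toGroup (Gdel G v) (fun u => PresentedGroup.of ↑u)
    (fun _ _ h => adj_commute (by simpa using h))

@[simp] lemma ιmap_of (u : ({u : V | u ≠ v} : Set V)) :
    ιmap G v (PresentedGroup.of u) = PresentedGroup.of ↑u :=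
  toGroup_of _ _ _ _

lemma commute_of_v_ιmap {a : Hgrp G v} (ha : a ∈ Asub G v) :
    Commute (PresentedGroup.of v : RAAG G) (ιmap G v a) := by
  induction ha using Subgroup.closure_induction with
  | mem y hy =>
    obtain ⟨u, hu, rfl⟩ := hy
    rw [ιmap_of]
    exact adj_commute hu
  | one => simpa using Commute.one_right _
  | mul a b _ _ ha hb => rw [map_mul]; exact ha.mul_right hb
  | inv a _ ha => rw [map_inv]; exact ha.inv_right

/-- The homomorphism `Egrp →* RAAG G`. -/
noncomputable def χmap : Egrp G v →* RAAG G :=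
  HNNExtension.lift (ιmap G v) (PresentedGroup.of v)
    (fun a => (commute_of_v_ιmap G v a.2).eq)

@[simp] lemma χmap_of (h : Hgrp G v) : χmap G v (of h) = ιmap G v h :=
  HNNExtension.lift_of _ _ _ _

@[simp] lemma χmap_t : χmap G v t = PresentedGroup.of v :=
  HNNExtension.lift_t _ _ _

/-- The retraction `Egrp →* Hgrp` killing `t`. -/
noncomputable def χ'map : Egrp G v →* Hgrp G v :=
  HNNExtension.lift (MonoidHom.id _) 1 (by simp)

@[simp] lemma χ'map_of (h : Hgrp G v) : χ'map G v (of h) = h :=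
  HNNExtension.lift_of _ _ _ _

lemma χψ : (χmap G v).comp (ψmap G v) = MonoidHom.id _ := by
  ext u
  rw [MonoidHom.comp_apply, MonoidHom.id_apply, ψmap_of]
  rcases eq_or_ne u v with rfl | h
  · rw [dif_pos rfl, χmap_t]
  · rw [dif_neg h, χmap_of, ιmap_of]

lemma ψχ : (ψmap G v).comp (χmap G v) = MonoidHom.id _ := by
  refine HNNExtension.hom_ext ?_ ?_
  · ext u
    have h : (↑u : V) ≠ v := u.2
    rw [MonoidHom.comp_apply, MonoidHom.comp_apply, MonoidHom.comp_apply,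
      MonoidHom.id_apply, χmap_of, ιmap_of, ψmap_of, dif_neg h, Subtype.coe_eta]
  · rw [MonoidHom.comp_apply, MonoidHom.id_apply, χmap_t, ψmap_of, dif_pos rfl]

open Classical in
lemma of_not_mem_Asub (w₀ : V) (hw₀v : w₀ ≠ v) (hvw₀ : ¬ G.Adj v w₀) :
    (PresentedGroup.of (⟨w₀, hw₀v⟩ : ({u : V | u ≠ v} : Set V)) : Hgrp G v) ∉ Asub G v := by
  intro hmem
  have hμA : ∀ a ∈ Asub G v,
      toGroup (Gdel G v) (fun u => if (u : V) = w₀ then Multiplicative.ofAdd (1 : ℤ) else 1)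
        (fun _ _ _ => Commute.all _ _) a = 1 := by
    intro a ha
    induction ha using Subgroup.closure_induction with
    | mem y hy =>
      obtain ⟨u, hu, rfl⟩ := hy
      have hne : (u : V) ≠ w₀ := fun hcon => hvw₀ (hcon ▸ hu)
      rw [toGroup_of, if_neg hne]
    | one => rw [map_one]
    | mul a b _ _ ha hb => rw [map_mul, ha, hb, mul_one]
    | inv a _ ha => rw [map_inv, ha, inv_one]
  have h1 := hμA _ hmem
  rw [toGroup_of, if_pos rfl] at h1
  have h2 : (1 : ℤ) = 0 := by simpa using congrArg Multiplicative.toAdd h1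
  exact one_ne_zero h2

end HNNStep


/-! ### Britton's lemma arguments -/

section Britton

open HNNExtension HNNExtension.NormalWord

variable {Grp : Type*} [Group Grp] {A : Subgroup Grp} {φ : A ≃* A}

/-- A central element of an HNN extension with `A = B` and `A` proper lies in the base group. -/
lemma central_mem_of_range (h₀ : Grp) (hh₀ : h₀ ∉ A) {x : HNNExtension Grp A A φ}
    (hx : ∀ y, x * y = y * x) : x ∈ (of : Grp →* HNNExtension Grp A A φ).range := by
  classical
  obtain ⟨d⟩ := TransversalPair.nonempty Grp A A
  set w : NormalWord d := x • NormalWord.empty with hwdef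
  have hw : w.prod φ = x := by rw [NormalWord.prod_smul, NormalWord.prod_empty, mul_one]
  by_cases hL : w.toList = []
  · refine ⟨w.head, ?_⟩
    rw [← hw]
    show of w.head = ReducedWord.prod φ w.toReducedWord
    rw [ReducedWord.prod]
    simp [hL]
  · exfalso
    set c : Grp := w.head * h₀ * w.head⁻¹ with hc
    set a := w.toList.getLast hL with ha
    set L' := w.toList.dropLast with hL'
    have hsplit : w.toList = L' ++ [a] := (w.toList.dropLast_append_getLast hL).symm
    have hchain : (L' ++ [(a.1, a.2 * c⁻¹)]).Chain'
        (fun p q => p.2 ∈ toSubgroup A A p.1 → p.1 = q.1) := by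
      have h0 := w.chain
      rw [hsplit, List.isChain_append] at h0
      refine List.isChain_append.2 ?_
      refine ⟨h0.1, List.isChain_singleton _, ?_⟩
      intro p hp q hq
      simp only [List.head?_cons, Option.mem_def, Option.some_inj] at hq
      subst hq
      exact h0.2.2 p hp a (by simp)
    set w₂ : ReducedWord Grp A A := ⟨c * w.head, L' ++ [(a.1, a.2 * c⁻¹)], hchain⟩ with hw₂
    have e1 : w.toReducedWord.prod φ =
        of w.head * ((L'.map (fun p => t ^ (p.1 : ℤ) * of p.2)).prod *
          (t ^ (a.1 : ℤ) * of a.2)) := by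
      rw [ReducedWord.prod]
      show of w.head * _ = _
      rw [hsplit]
      simp [mul_assoc]
    have e2 : w₂.prod φ =
        of c * (of w.head * ((L'.map (fun p => t ^ (p.1 : ℤ) * of p.2)).prod *
          (t ^ (a.1 : ℤ) * of a.2))) * (of c)⁻¹ := by
      rw [ReducedWord.prod]
      show of (c * w.head) * _ = _
      simp only [List.map_append, List.prod_append, List.map_cons, List.map_nil,
        List.prod_cons, List.prod_nil, map_mul, map_inv, hw₂]
      group
    have hprod : w.toReducedWord.prod φ = w₂.prod φ := by
      rw [e2, ← e1, hw, ← hx (of c), mul_assoc, mul_inv_cancel, mul_one]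
    obtain ⟨hfst, hcoset⟩ := ReducedWord.map_fst_eq_and_of_prod_eq φ hprod
    have hhead : w.toList.head? = some (w.toList.head hL) := List.head?_eq_head hL
    have hmem := hcoset (w.toList.head hL).1 (by rw [hhead]; rfl)
    have hw₂head : w₂.head = c * w.head := rfl
    have : h₀ ∈ toSubgroup A A (-(w.toList.head hL).1) := by
      have hcalc : w.head⁻¹ * w₂.head = h₀ := by
        rw [hw₂head, hc]
        group
      rwa [hcalc] at hmem
    rcases Int.units_eq_one_or (w.toList.head hL).1 with h1 | h1 <;>
      rw [h1] at this <;> simp only [toSubgroup] at this <;>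
      simp at this <;> exact hh₀ this

/-- If `t` commutes with `of h` in an HNN extension with `A = B`, then `h ∈ A`. -/
lemma mem_of_t_comm {h : Grp}
    (hcomm : t * of h = (of h : HNNExtension Grp A A φ) * t) : h ∈ A := by
  by_contra hA
  have hchain : ([((1 : ℤˣ), h), ((-1 : ℤˣ), h⁻¹)] : List (ℤˣ × Grp)).Chain'
      (fun p q => p.2 ∈ toSubgroup A A p.1 → p.1 = q.1) := by
    refine List.isChain_cons_cons.2 ⟨?_, List.isChain_singleton _⟩
    intro hmem
    exact absurd (by simpa [toSubgroup] using hmem) hA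
  set w : ReducedWord Grp A A := ⟨1, [((1 : ℤˣ), h), ((-1 : ℤˣ), h⁻¹)], hchain⟩ with hwdef
  have hp : w.prod φ = 1 := by
    rw [ReducedWord.prod]
    show of 1 * _ = 1
    simp only [List.map_cons, List.map_nil, List.prod_cons, List.prod_nil, map_one, one_mul,
      mul_one, Units.val_one, Units.val_neg, zpow_one, zpow_neg, map_inv, hwdef]
    rw [← mul_assoc, hcomm]
    group
  have hnil := ReducedWord.toList_eq_nil_of_mem_of_range φ w (by rw [hp]; exact one_mem _)
  simp [hwdef] at hnil

end Britton


/-! ### The main induction -/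

open HNNExtension in
lemma center_le_dom : ∀ (n : ℕ) {V : Type*} [Fintype V] (G : SimpleGraph V),
    Fintype.card V ≤ n →
    Subgroup.center (RAAG G) ≤
      Subgroup.closure (PresentedGroup.of '' {v : V | ∀ w : V, w ≠ v → G.Adj v w}) := by
  intro n
  induction n with
  | zero =>
    intro V _ G hcard
    have hE : IsEmpty V := Fintype.card_eq_zero_iff.1 (Nat.le_zero.1 hcard)
    have himg : (PresentedGroup.of '' {v : V | ∀ w : V, w ≠ v → G.Adj v w} :
        Set (RAAG G)) = Set.range PresentedGroup.of := by
      rw [Set.eq_univ_of_forall (s := {v : V | ∀ w : V, w ≠ v → G.Adj v w})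
        (fun u => hE.elim u), Set.image_univ]
    rw [himg, PresentedGroup.closure_range_of]
    exact le_top
  | succ n ih =>
    intro V _ G hcard
    classical
    by_cases hD : ∀ v : V, ∀ w : V, w ≠ v → G.Adj v w
    · have himg : (PresentedGroup.of '' {v : V | ∀ w : V, w ≠ v → G.Adj v w} :
          Set (RAAG G)) = Set.range PresentedGroup.of := by
        rw [Set.eq_univ_of_forall (s := {v : V | ∀ w : V, w ≠ v → G.Adj v w})
          (fun u => hD u), Set.image_univ]
      rw [himg, PresentedGroup.closure_range_of]
      exact le_top
    · push_neg at hD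
      obtain ⟨v, w₀, hw₀v, hvw₀⟩ := hD
      intro g hg
      have hgc := Subgroup.mem_center_iff.1 hg
      set x := ψmap G v g with hxdef
      have hxc : ∀ y, x * y = y * x := by
        intro y
        have hy : ψmap G v (χmap G v y) = y := DFunLike.congr_fun (ψχ G v) y
        calc x * y = ψmap G v g * ψmap G v (χmap G v y) := by rw [hy]
          _ = ψmap G v (g * χmap G v y) := by rw [map_mul]
          _ = ψmap G v (χmap G v y * g) := by rw [hgc]
          _ = y * x := by rw [map_mul, hy]
      obtain ⟨h, hh⟩ := central_mem_of_range (φ := MulEquiv.refl (Asub G v))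
        (PresentedGroup.of ⟨w₀, hw₀v⟩) (of_not_mem_Asub G v w₀ hw₀v hvw₀) hxc
      have hA : h ∈ Asub G v := mem_of_t_comm (by rw [hh]; exact (hxc t).symm)
      have hcent : h ∈ Subgroup.center (Hgrp G v) := by
        rw [Subgroup.mem_center_iff]
        intro y
        apply HNNExtension.of_injective (φ := MulEquiv.refl (Asub G v))
        rw [map_mul, map_mul, hh, ← hxc (of y)]
      have hsub : Fintype.card ({u : V | u ≠ v} : Set V) ≤ n := by
        have hlt : Fintype.card ({u : V | u ≠ v} : Set V) < Fintype.card V :=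
          Fintype.card_subtype_lt (p := fun u => u ≠ v) (x := v) (by simp)
        omega
      have hDom := ih (Gdel G v) hsub hcent
      have hint := closure_inter_le (Gdel G v)
        {u | ∀ w, w ≠ u → (Gdel G v).Adj u w} {u | G.Adj v ↑u} ⟨hDom, hA⟩
      have hg_eq : g = ιmap G v h := by
        calc g = χmap G v (ψmap G v g) := (DFunLike.congr_fun (χψ G v) g).symm
          _ = χmap G v (of h) := by rw [← hxdef, ← hh]
          _ = ιmap G v h := χmap_of G v h
      rw [hg_eq]
      clear hg_eq hcent hDom hA hh hxc hgc hg hxdef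
      induction hint using Subgroup.closure_induction with
      | mem y hy =>
        obtain ⟨u, ⟨hu1, hu2⟩, rfl⟩ := hy
        rw [ιmap_of]
        refine Subgroup.subset_closure ⟨↑u, ?_, rfl⟩
        intro w hwu
        rcases eq_or_ne w v with rfl | hwv
        · exact hu2.symm
        · have hne : (⟨w, hwv⟩ : ({u : V | u ≠ v} : Set V)) ≠ u := by
            intro hcon
            exact hwu (by rw [← hcon])
          have := hu1 _ hne
          simpa using this
      | one => rw [map_one]; exact one_mem _
      | mul a b _ _ ha hb => rw [map_mul]; exact mul_mem ha hb
      | inv a _ ha => rw [map_inv]; exact inv_mem ha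

end RAAGAux

open RAAGAux

/-- The center of a right-angled Artin group is the special subgroup generated by the
vertices adjacent to every other vertex; in particular, if no vertex is adjacent to all
other vertices then the center is trivial. -/
theorem raag_center {V : Type*} [Fintype V] (G : SimpleGraph V) :
    Subgroup.center (RAAG G) =
      Subgroup.closure (PresentedGroup.of '' {v : V | ∀ w : V, w ≠ v → G.Adj v w}) ∧
    ((∀ v : V, ∃ w : V, w ≠ v ∧ ¬ G.Adj v w) → Subgroup.center (RAAG G) = ⊥) := by
  have h1 : Subgroup.center (RAAG G) =
      Subgroup.closure (PresentedGroup.of '' {v : V | ∀ w : V, w ≠ v → G.Adj v w}) := by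
    refine le_antisymm (center_le_dom (Fintype.card V) G le_rfl) ?_
    rw [Subgroup.closure_le]
    rintro y ⟨u, hu, rfl⟩
    exact of_mem_center hu
  refine ⟨h1, fun hyp => ?_⟩
  have hempty : {v : V | ∀ w : V, w ≠ v → G.Adj v w} = ∅ := by
    ext u
    simp only [Set.mem_setOf_eq, Set.mem_empty_iff_false, iff_false]
    intro hu
    obtain ⟨w, hw1, hw2⟩ := hyp u
    exact hw2 (hu w hw1)
  rw [h1, hempty, Set.image_empty, Subgroup.closure_empty]
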